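/- Let T be a prime ring, V a uniform right ideal of T, and L = {v ∈ V : r_T(v) ∩ V ≠ 0}. If L is multiplicatively closed and nilpotent, then L² = 0. -/

import Mathlib

private lemma prime_aux {T : Type*} [Ring T]
    (hprime : ∀ I J : TwoSidedIdeal T, (∀ a ∈ I, ∀ b ∈ J, a * b = 0) → I = ⊥ ∨ J = ⊥)
    (x y : T) (h : ∀ t, x * t * y = 0) : x = 0 ∨ y = 0 := by
  set I : TwoSidedIdeal T := TwoSidedIdeal.mk' {a | ∀ t, a * t * y = 0}
    (by intro t; simp)
    (by intro a b ha hb t; simp only [Set.mem_setOf_eq] at *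
        rw [add_mul, add_mul, ha, hb, add_zero])
    (by intro a ha t; simp only [Set.mem_setOf_eq] at *
        rw [neg_mul, neg_mul, ha, neg_zero])
    (by intro s a ha t; simp only [Set.mem_setOf_eq] at *
        rw [mul_assoc, mul_assoc, ← mul_assoc a, ha, mul_zero])
    (by intro a s ha t; simp only [Set.mem_setOf_eq] at *
        rw [mul_assoc a s t, ha]) with hI
  set J : TwoSidedIdeal T := TwoSidedIdeal.mk'
    {b | ∀ a, (∀ t, a * t * y = 0) → ∀ t, a * t * b = 0}
    (by intro a _ t; simp)
    (by intro b c hb hc a ha t; simp only [Set.mem_setOf_eq] at *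
        rw [mul_add, hb a ha, hc a ha, add_zero])
    (by intro b hb a ha t; simp only [Set.mem_setOf_eq] at *
        rw [mul_neg, hb a ha, neg_zero])
    (by intro s b hb a ha t; simp only [Set.mem_setOf_eq] at *
        rw [show a * t * (s * b) = a * (t * s) * b by noncomm_ring, hb a ha])
    (by intro b s hb a ha t; simp only [Set.mem_setOf_eq] at *
        rw [show a * t * (b * s) = (a * t * b) * s by noncomm_ring, hb a ha, zero_mul]) with hJ
  have hx : x ∈ I := by rw [hI, TwoSidedIdeal.mem_mk']; exact h
  have hy : y ∈ J := by rw [hJ, TwoSidedIdeal.mem_mk']; intro a ha t; exact ha t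
  have := hprime I J (by
    intro a ha b hb
    rw [hJ, TwoSidedIdeal.mem_mk'] at hb
    rw [hI, TwoSidedIdeal.mem_mk'] at ha
    have := hb a ha 1
    rwa [mul_one] at this)
  rcases this with hIb | hJb
  · left; rw [hIb, TwoSidedIdeal.mem_bot] at hx; exact hx
  · right; rw [hJb, TwoSidedIdeal.mem_bot] at hy; exact hy

theorem stmt_9 (T : Type*) [Ring T]
    (hprime : ∀ I J : TwoSidedIdeal T, (∀ a ∈ I, ∀ b ∈ J, a * b = 0) → I = ⊥ ∨ J = ⊥)
    (V : Submodule Tᵐᵒᵖ T) (hV : V ≠ ⊥)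
    (huniform : ∀ A B : Submodule Tᵐᵒᵖ T,
      A ≤ V → B ≤ V → A ≠ ⊥ → B ≠ ⊥ → A ⊓ B ≠ ⊥)
    (L : Set T) (hL : L = {v : T | v ∈ V ∧ ∃ t ∈ V, t ≠ 0 ∧ v * t = 0})
    (hmul : ∀ a ∈ L, ∀ b ∈ L, a * b ∈ L)
    (hnil : ∃ n : ℕ, 0 < n ∧
      ∀ l : List T, (∀ x ∈ l, x ∈ L) → l.length = n → l.prod = 0) :
    ∀ a ∈ L, ∀ b ∈ L, a * b = 0 := by
  by_contra hcon
  push_neg at hcon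
  obtain ⟨a, ha, b, hb, hab⟩ := hcon
  obtain ⟨n, hnpos, hn⟩ := hnil
  classical
  set P : ℕ → Prop := fun m => ∀ l : List T, (∀ x ∈ l, x ∈ L) → l.length = m → l.prod = 0
    with hP
  have hPmono : ∀ m, P m → P (m + 1) := by
    intro m hm l hlL hlen
    cases l with
    | nil => simp at hlen
    | cons c l' =>
      have : l'.prod = 0 := hm l' (fun x hx => hlL x (List.mem_cons_of_mem _ hx))
        (by simpa using hlen)
      simp [List.prod_cons, this]
  have hEx : ∃ m, P m := ⟨n, hn⟩
  set N := Nat.find hEx with hN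
  have hPN : P N := Nat.find_spec hEx
  have hnot2 : ¬ P 2 := by
    intro h2
    have := h2 [a, b] (by intro x hx; simp at hx; rcases hx with rfl | rfl <;> assumption) rfl
    simp [List.prod_cons] at this
    exact hab this
  have hN3 : 3 ≤ N := by
    by_contra hlt
    push_neg at hlt
    interval_cases N <;>
      [exact hnot2 (hPmono 1 (hPmono 0 hPN));
       exact hnot2 (hPmono 1 hPN);
       exact hnot2 hPN]
  have hnotN1 : ¬ P (N - 1) := Nat.find_min hEx (by omega)
  simp only [hP] at hnotN1
  push_neg at hnotN1
  obtain ⟨l, hlL, hlen, hlprod⟩ := hnotN1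
  -- split off last two elements
  have hlen2 : 2 ≤ l.reverse.length := by rw [List.length_reverse]; omega
  obtain ⟨v₁, v₂, r, hrev⟩ : ∃ v₁ v₂ r, l.reverse = v₁ :: v₂ :: r := by
    match hrev : l.reverse with
    | [] => rw [hrev] at hlen2; simp at hlen2
    | [x] => rw [hrev] at hlen2; simp at hlen2
    | v₁ :: v₂ :: r => exact ⟨_, _, _, rfl⟩
  have hl : l = r.reverse ++ [v₂, v₁] := by
    rw [← List.reverse_reverse l, hrev]; simp
  have hv₁L : v₁ ∈ L := hlL v₁ (by rw [hl]; simp)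
  have hv₂L : v₂ ∈ L := hlL v₂ (by rw [hl]; simp)
  set p := r.reverse.prod with hp
  have hx : l.prod = p * (v₂ * v₁) := by
    rw [hl, List.prod_append]; simp [List.prod_cons, mul_assoc]; rfl
  -- key : any product p * v₂ * w * v₁ with w ∈ L is zero
  have key : ∀ w ∈ L, p * (v₂ * (w * v₁)) = 0 := by
    intro w hw
    have := hPN (r.reverse ++ [v₂, w, v₁])
      (by
        intro x hx
        rw [List.mem_append] at hx
        rcases hx with hx | hx
        · exact hlL x (by rw [hl]; exact List.mem_append_left _ hx)
        · simp at hx; rcases hx with rfl | rfl | rfl <;> assumption)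
      (by
        have hr : r.length = N - 3 := by
          have := congrArg List.length hrev
          simp at this; omega
        simp [List.length_append, hr]; omega)
    rw [List.prod_append] at this
    simpa [List.prod_cons, mul_assoc] using this
  -- v₁ * t * v₂ ∈ L for all t
  have hmem : ∀ t : T, v₁ * t * v₂ ∈ L := by
    intro t
    rw [hL] at hv₁L hv₂L ⊢
    obtain ⟨hv₁V, _⟩ := hv₁L
    obtain ⟨hv₂V, s, hsV, hs0, hs⟩ := hv₂L
    refine ⟨?_, s, hsV, hs0, ?_⟩
    · have : v₁ * (t * v₂) ∈ V := V.smul_mem (MulOpposite.op (t * v₂)) hv₁V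
      simpa [mul_assoc] using this
    · rw [mul_assoc, hs, mul_zero]
  have hxty : ∀ t : T, l.prod * t * (v₂ * v₁) = 0 := by
    intro t
    have := key (v₁ * t * v₂) (hmem t)
    rw [hx]
    calc p * (v₂ * v₁) * t * (v₂ * v₁) = p * (v₂ * (v₁ * t * v₂ * v₁)) := by
          noncomm_ring
      _ = 0 := this
  rcases prime_aux hprime l.prod (v₂ * v₁) hxty with h | h
  · exact hlprod h
  · rw [hx, h, mul_zero] at hlprod; exact hlprod rfl
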